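/- Let X be a Lie algebra over ℝ and R : X → X a linear map. Define the Nijenhuis torsion N_R(x,y) = [Rx, Ry] − R[Rx, y] − R[x, Ry] + R²[x, y]. If N_R = 0 (R is hereditary), then for all x, y ∈ X and all natural numbers m, n: [Rᵐx, Rⁿy] − Rⁿ[Rᵐx, y] = Rᵐ[x, Rⁿy] − R^{m+n}[x, y]. -/
import Mathlib


/-- If the Nijenhuis torsion of a linear operator `R` on a Lie algebra vanishes
(`R` is hereditary), then
`[Rᵐx, Rⁿy] − Rⁿ[Rᵐx, y] = Rᵐ[x, Rⁿy] − R^{m+n}[x, y]` for all `m n`. -/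
theorem hereditary_power_identity {X : Type*} [LieRing X] [LieAlgebra ℝ X]
    (R : X →ₗ[ℝ] X)
    (hR : ∀ x y : X,
      ⁅R x, R y⁆ - R ⁅R x, y⁆ - R ⁅x, R y⁆ + R (R ⁅x, y⁆) = 0) :
    ∀ (x y : X) (m n : ℕ),
      ⁅(R ^ m) x, (R ^ n) y⁆ - (R ^ n) ⁅(R ^ m) x, y⁆
        = (R ^ m) ⁅x, (R ^ n) y⁆ - (R ^ (m + n)) ⁅x, y⁆ := by
  have pw : ∀ (k : ℕ) (z : X), (R ^ (k + 1)) z = R ((R ^ k) z) := by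
    intro k z
    rw [pow_succ']
    rfl
  have key : ∀ (x y : X) (n : ℕ),
      ⁅R x, (R ^ n) y⁆ - (R ^ n) ⁅R x, y⁆
        = R ⁅x, (R ^ n) y⁆ - (R ^ (n + 1)) ⁅x, y⁆ := by
    intro x y n
    induction n generalizing y with
    | zero => simp
    | succ n ih =>
      have h1 := hR x ((R ^ n) y)
      have h2 := congrArg R (ih y)
      simp only [map_sub] at h2
      rw [pw n y, pw (n + 1) ⁅x, y⁆, pw n ⁅R x, y⁆]
      linear_combination (norm := module) h1 + h2
  have pw2 : ∀ (k : ℕ) (z : X), (R ^ (k + 1)) z = (R ^ k) (R z) := by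
    intro k z
    rw [pow_succ]
    rfl
  have pw3 : ∀ (a b : ℕ) (z : X), (R ^ (a + b)) z = (R ^ a) ((R ^ b) z) := by
    intro a b z
    rw [pow_add]
    rfl
  intro x y m n
  induction m generalizing x with
  | zero => simp
  | succ m ih =>
    have h1 := ih (R x)
    have h2 := congrArg (R ^ m) (key x y n)
    simp only [map_sub] at h2
    rw [pw2 m x, pw2 m ⁅x, (R ^ n) y⁆,
      show m + 1 + n = m + (n + 1) by omega, pw3 m (n + 1) ⁅x, y⁆,
      pw3 m n ⁅R x, y⁆] at *
    linear_combination (norm := module) h1 + h2
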